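/- Let C be an open cone in a finite-dimensional vector space containing no lines, with cross section D having compact closure. If a sequence (x_n) in D converges in the usual (Euclidean) sense to a point x ∈ closure(D), then the functions r_C(·,x_n) − r_C(b,x_n) converge pointwise on C to r_C(·,x) − r_C(b,x). Conversely, a sequence in D converges pointwise in this reverse-Funk sense to ψ_x for some x ∈ ∂D if and only if it converges in the usual sense to x. -/

import Mathlib

open Set Filter Topology

set_option linter.unusedSectionVars false
set_option linter.unreachableTactic false
set_option linter.unusedTactic false
set_option maxHeartbeats 1000000

variable {V : Type*} [NormedAddCommGroup V] [NormedSpace ℝ V] [FiniteDimensional ℝ V]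

/-- An open cone: non-empty, open, convex, invariant under positive scaling, not containing 0. -/
def IsOpenCone (T : Set V) : Prop :=
  T.Nonempty ∧ IsOpen T ∧ Convex ℝ T ∧ (∀ c : ℝ, 0 < c → ∀ u ∈ T, c • u ∈ T) ∧ (0 : V) ∉ T

/-- The gauge `M_T(y/x) = inf {λ > 0 : λ • x - y ∈ closure T}`. -/
noncomputable def funkM (T : Set V) (y x : V) : ℝ :=
  sInf {l : ℝ | 0 < l ∧ l • x - y ∈ closure T}

/-- The Funk metric `F_T(x,y) = log inf {λ > 0 : λ • y - x ∈ closure T}`. -/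
noncomputable def funkF (T : Set V) (x y : V) : ℝ := Real.log (funkM T x y)

/-- The reverse Funk metric `r_T(x,y) = F_T(y,x)`. -/
noncomputable def revF (T : Set V) (x y : V) : ℝ := Real.log (funkM T y x)

/-- The Hilbert metric as the symmetrisation of the Funk metric. -/
noncomputable def hilD (T : Set V) (x y : V) : ℝ := funkF T x y + revF T x y

/-- The dual cone, as a set of continuous linear functionals. -/
def dualCone (T : Set V) : Set (V →L[ℝ] ℝ) := {z | ∀ u ∈ T, 0 ≤ z u}

/-- The open tangent cone `τ(T,x) = {λ (w - x) : λ > 0, w ∈ T}`. -/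
def openTangent (T : Set V) (x : V) : Set V :=
  {v | ∃ l : ℝ, 0 < l ∧ ∃ w ∈ T, v = l • (w - x)}

section aux
variable {C : Set V}

lemma clC_smul (hC : IsOpenCone C) {c : ℝ} (hc : 0 < c) {u : V} (hu : u ∈ closure C) :
    c • u ∈ closure C := by
  have h1 : c • u ∈ (c • ·) '' closure C := ⟨u, hu, rfl⟩
  have h2 : (c • ·) '' closure C ⊆ closure ((c • ·) '' C) :=
    image_closure_subset_closure_image (continuous_const_smul c)
  refine closure_mono ?_ (h2 h1)
  rintro _ ⟨v, hv, rfl⟩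
  exact hC.2.2.2.1 c hc v hv

lemma C_add_C (hC : IsOpenCone C) {u v : V} (hu : u ∈ C) (hv : v ∈ C) : u + v ∈ C := by
  have h : (1/2:ℝ) • u + (1/2:ℝ) • v ∈ C :=
    hC.2.2.1 hu hv (by norm_num) (by norm_num) (by norm_num)
  have h2 := hC.2.2.2.1 2 (by norm_num) _ h
  convert h2 using 1
  rw [smul_add, smul_smul, smul_smul]
  norm_num

lemma clC_add (hC : IsOpenCone C) {u v : V} (hu : u ∈ closure C) (hv : v ∈ closure C) :
    u + v ∈ closure C := by
  have h : (1/2:ℝ) • u + (1/2:ℝ) • v ∈ closure C :=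
    hC.2.2.1.closure hu hv (by norm_num) (by norm_num) (by norm_num)
  have h2 := clC_smul hC (c := 2) (by norm_num) h
  convert h2 using 1
  rw [smul_add, smul_smul, smul_smul]
  norm_num

lemma mem_C_add_cl (hC : IsOpenCone C) {u v : V} (hu : u ∈ C) (hv : v ∈ closure C) :
    u + v ∈ C := by
  obtain ⟨ε, hε, hball⟩ := Metric.isOpen_iff.1 hC.2.1 u hu
  obtain ⟨v', hv', hd⟩ := Metric.mem_closure_iff.1 hv ε hε
  have h1 : u + (v - v') ∈ C := by
    apply hball
    have hn : ‖v - v'‖ < ε := by rwa [← dist_eq_norm]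
    simpa [Metric.mem_ball, dist_eq_norm, add_sub_cancel_left] using hn
  have := C_add_C hC h1 hv'
  convert this using 1
  abel

lemma funkS_nonempty (hC : IsOpenCone C) {u : V} (hu : u ∈ C) (y : V) :
    {l : ℝ | 0 < l ∧ l • u - y ∈ closure C}.Nonempty := by
  obtain ⟨ε, hε, hball⟩ := Metric.isOpen_iff.1 hC.2.1 u hu
  set l : ℝ := ‖y‖ / ε + 1 with hl
  have hl0 : 0 < l := by positivity
  refine ⟨l, hl0, subset_closure ?_⟩
  have h1 : u - l⁻¹ • y ∈ C := by
    apply hball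
    have : ‖l⁻¹ • y‖ < ε := by
      rw [norm_smul, norm_inv, Real.norm_eq_abs, abs_of_pos hl0]
      rw [inv_mul_lt_iff₀ hl0]
      calc ‖y‖ = (‖y‖ / ε) * ε := by field_simp
        _ < l * ε := by
            apply mul_lt_mul_of_pos_right _ hε
            simp [hl]
    simpa [Metric.mem_ball, dist_eq_norm] using this
  have h2 := hC.2.2.2.1 l hl0 _ h1
  convert h2 using 1
  rw [smul_sub, smul_smul, mul_inv_cancel₀ (ne_of_gt hl0), one_smul]

lemma funkS_bdd (y u : V) : BddBelow {l : ℝ | 0 < l ∧ l • u - y ∈ closure C} :=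
  ⟨0, fun _ hl => le_of_lt hl.1⟩

lemma funkM_mem (hC : IsOpenCone C)
    (hlines : ∀ v, v ∈ closure C → -v ∈ closure C → v = 0)
    {u : V} (hu : u ∈ C) {y : V} (hy : y ∈ closure C) (hy0 : y ≠ 0) :
    0 < funkM C y u ∧ funkM C y u • u - y ∈ closure C := by
  have hne := funkS_nonempty hC hu y
  have hbdd := funkS_bdd (C := C) y u
  have hmem : funkM C y u ∈ closure {l : ℝ | 0 < l ∧ l • u - y ∈ closure C} :=
    csInf_mem_closure hne hbdd
  have hsub : closure {l : ℝ | 0 < l ∧ l • u - y ∈ closure C} ⊆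
      {l : ℝ | 0 ≤ l ∧ l • u - y ∈ closure C} := by
    apply closure_minimal
    · exact fun l hl => ⟨le_of_lt hl.1, hl.2⟩
    · apply IsClosed.inter
      · exact isClosed_le continuous_const continuous_id
      · exact IsClosed.preimage (by continuity) isClosed_closure
  obtain ⟨h0, hK⟩ := hsub hmem
  have hpos : 0 < funkM C y u := by
    rcases lt_or_eq_of_le h0 with h | h
    · exact h
    · exfalso
      rw [← h] at hK
      simp at hK
      exact hy0 (hlines y hy hK)
  exact ⟨hpos, hK⟩

lemma funkM_lip (hC : IsOpenCone C)
    (hlines : ∀ v, v ∈ closure C → -v ∈ closure C → v = 0)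
    {u : V} (hu : u ∈ C) {ε : ℝ} (hε : 0 < ε) (hball : Metric.ball u ε ⊆ C)
    {y z : V} (hz : z ∈ closure C) (hz0 : z ≠ 0) :
    funkM C y u ≤ funkM C z u + ‖y - z‖ / ε := by
  obtain ⟨hMz, hKz⟩ := funkM_mem hC hlines hu hz hz0
  apply le_of_forall_pos_le_add
  intro δ hδ
  set t : ℝ := ‖y - z‖ / ε + δ with ht
  have ht0 : 0 < t := by positivity
  have hmem : (funkM C z u + t) • u - y ∈ closure C := by
    have h1 : t • u - (y - z) ∈ C := by
      have h2 : u - t⁻¹ • (y - z) ∈ C := by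
        apply hball
        have : ‖t⁻¹ • (y - z)‖ < ε := by
          rw [norm_smul, norm_inv, Real.norm_eq_abs, abs_of_pos ht0, inv_mul_lt_iff₀ ht0]
          calc ‖y - z‖ = ‖y - z‖ / ε * ε := by field_simp
            _ < t * ε := by
                apply mul_lt_mul_of_pos_right _ hε
                simp [ht, hδ]
        simpa [Metric.mem_ball, dist_eq_norm] using this
      have h3 := hC.2.2.2.1 t ht0 _ h2
      convert h3 using 1
      rw [smul_sub, smul_smul, mul_inv_cancel₀ (ne_of_gt ht0), one_smul]
    have h4 := clC_add hC hKz (subset_closure h1)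
    convert h4 using 1
    rw [add_smul]
    abel
  have := csInf_le (funkS_bdd (C := C) y u) (Set.mem_setOf.2 ⟨by positivity, hmem⟩)
  calc funkM C y u ≤ funkM C z u + t := this
    _ = funkM C z u + ‖y - z‖ / ε + δ := by rw [ht]; ring

lemma funkM_tendsto (hC : IsOpenCone C)
    (hlines : ∀ v, v ∈ closure C → -v ∈ closure C → v = 0)
    {u : V} (hu : u ∈ C) {x : V} (hx : x ∈ closure C) (hx0 : x ≠ 0)
    {xs : ℕ → V} (hxs : ∀ n, xs n ∈ closure C) (hxs0 : ∀ n, xs n ≠ 0)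
    (hconv : Tendsto xs atTop (𝓝 x)) :
    Tendsto (fun n => funkM C (xs n) u) atTop (𝓝 (funkM C x u)) := by
  obtain ⟨ε, hε, hball⟩ := Metric.isOpen_iff.1 hC.2.1 u hu
  have key : ∀ n, |funkM C (xs n) u - funkM C x u| ≤ ‖xs n - x‖ / ε := by
    intro n
    rw [abs_sub_le_iff]
    constructor
    · have := funkM_lip hC hlines hu hε hball (y := xs n) hx hx0
      linarith
    · have := funkM_lip hC hlines hu hε hball (y := x) (hxs n) (hxs0 n)
      rw [norm_sub_rev] at this
      linarith
  have h0 : Tendsto (fun n => funkM C (xs n) u - funkM C x u) atTop (𝓝 0) := by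
    apply squeeze_zero_norm key
    have h1 : Tendsto (fun n => ‖xs n - x‖) atTop (𝓝 0) :=
      tendsto_iff_norm_sub_tendsto_zero.1 hconv
    simpa using h1.div_const ε
  have := h0.add_const (funkM C x u)
  simpa using this

lemma funkM_shift (hC : IsOpenCone C)
    (hlines : ∀ v, v ∈ closure C → -v ∈ closure C → v = 0)
    {u : V} (hu : u ∈ C) {y : V} (hy : y ∈ closure C) (hy0 : y ≠ 0)
    {s : ℝ} (hs : 0 < s) :
    funkM C y (u + s • y) = funkM C y u / (1 + funkM C y u * s) := by
  set m := funkM C y u with hm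
  obtain ⟨hm0, hmK⟩ := funkM_mem hC hlines hu hy hy0
  have hden : 0 < 1 + m * s := by positivity
  apply le_antisymm
  · apply csInf_le (funkS_bdd _ _)
    refine Set.mem_setOf.2 ⟨by positivity, ?_⟩
    have h1 : (1 + m * s)⁻¹ • (m • u - y) ∈ closure C :=
      clC_smul hC (by positivity) hmK
    convert h1 using 1
    have hd : (1 + m * s) ≠ 0 := ne_of_gt hden
    match_scalars <;> field_simp <;> ring
  · apply le_csInf (funkS_nonempty hC (mem_C_add_cl hC hu (clC_smul hC hs hy)) y)
    rintro l ⟨hl0, hlK⟩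
    rcases le_or_gt 1 (l * s) with h | h
    · rw [div_le_iff₀ hden]
      have : m ≤ l * (m * s) := by
        calc m = m * 1 := by ring
          _ ≤ m * (l * s) := by nlinarith
          _ = l * (m * s) := by ring
      nlinarith
    · set t : ℝ := 1 - l * s with htdef
      have ht0 : 0 < t := by simp [htdef]; linarith
      have h2 : (l / t) • u - y ∈ closure C := by
        have h3 : t⁻¹ • (l • (u + s • y) - y) ∈ closure C := clC_smul hC (by positivity) hlK
        convert h3 using 1
        have ht : t ≠ 0 := ne_of_gt ht0
        match_scalars
        all_goals field_simp
        all_goals simp [htdef]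
        all_goals ring
      have h4 : m ≤ l / t := csInf_le (funkS_bdd _ _) (Set.mem_setOf.2 ⟨by positivity, h2⟩)
      rw [div_le_iff₀ hden]
      rw [le_div_iff₀ ht0] at h4
      have : m * t ≤ l := h4
      rw [htdef] at this
      nlinarith

lemma inj_aux (hC : IsOpenCone C)
    (hlines : ∀ v, v ∈ closure C → -v ∈ closure C → v = 0)
    {b : V} (hb : b ∈ C)
    {x y : V} (hx : x ∈ closure C) (hx0 : x ≠ 0) (hy : y ∈ closure C) (hy0 : y ≠ 0)
    {c : ℝ} (hc : 0 < c) (h : ∀ u ∈ C, funkM C x u = c * funkM C y u) :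
    c • y - x ∈ closure C := by
  set m := funkM C y b with hm
  obtain ⟨hm0, _⟩ := funkM_mem hC hlines hb hy hy0
  have key : ∀ n : ℕ, (c * m / (1 + m * ((n:ℝ)+1))) • b
      + (c * m / (1 + m * ((n:ℝ)+1)) * ((n:ℝ)+1)) • y - x ∈ closure C := by
    intro n
    set s : ℝ := (n:ℝ) + 1 with hsdef
    have hs : 0 < s := by positivity
    have hus : b + s • y ∈ C := mem_C_add_cl hC hb (clC_smul hC hs hy)
    have hval : funkM C x (b + s • y) = c * m / (1 + m * s) := by
      rw [h _ hus, funkM_shift hC hlines hb hy hy0 hs, ← hm]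
      ring
    obtain ⟨hpos, hKmem⟩ := funkM_mem hC hlines hus hx hx0
    rw [hval] at hKmem
    convert hKmem using 1
    rw [smul_add, smul_smul]
  have hden : ∀ n : ℕ, (0:ℝ) < 1 + m * ((n:ℝ)+1) := by
    intro n; positivity
  have h1 : Tendsto (fun n : ℕ => 1 + m * ((n:ℝ)+1)) atTop atTop := by
    apply tendsto_atTop_add_const_left
    apply Tendsto.const_mul_atTop hm0
    exact tendsto_atTop_add_const_right _ _ tendsto_natCast_atTop_atTop
  have h2 : Tendsto (fun n : ℕ => c * m / (1 + m * ((n:ℝ)+1))) atTop (𝓝 0) :=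
    Tendsto.div_atTop tendsto_const_nhds h1
  have h3 : Tendsto (fun n : ℕ => c * m / (1 + m * ((n:ℝ)+1)) * ((n:ℝ)+1)) atTop (𝓝 c) := by
    have heq : ∀ n : ℕ, c * m / (1 + m * ((n:ℝ)+1)) * ((n:ℝ)+1)
        = c - c / (1 + m * ((n:ℝ)+1)) := by
      intro n
      have := hden n
      field_simp
      ring
    have h4 : Tendsto (fun n : ℕ => c - c / (1 + m * ((n:ℝ)+1))) atTop (𝓝 (c - 0)) :=
      tendsto_const_nhds.sub (Tendsto.div_atTop tendsto_const_nhds h1)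
    rw [sub_zero] at h4
    exact h4.congr (fun n => (heq n).symm)
  have hw : Tendsto (fun n : ℕ => (c * m / (1 + m * ((n:ℝ)+1))) • b
      + (c * m / (1 + m * ((n:ℝ)+1)) * ((n:ℝ)+1)) • y - x) atTop (𝓝 (c • y - x)) := by
    have := ((h2.smul_const b).add (h3.smul_const y)).sub_const x
    simpa using this
  exact isClosed_closure.mem_of_tendsto hw (Filter.Eventually.of_forall key)

lemma inj_final (hC : IsOpenCone C)
    (hlines : ∀ v, v ∈ closure C → -v ∈ closure C → v = 0)
    (ψ : V →L[ℝ] ℝ) {b : V} (hb : b ∈ C)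
    {x y : V} (hx : x ∈ closure C) (hx0 : x ≠ 0) (hxψ : ψ x = 1)
    (hy : y ∈ closure C) (hy0 : y ≠ 0) (hyψ : ψ y = 1)
    (h : ∀ u ∈ C, Real.log (funkM C x u) - Real.log (funkM C x b)
        = Real.log (funkM C y u) - Real.log (funkM C y b)) : x = y := by
  have hxb := funkM_mem hC hlines hb hx hx0
  have hyb := funkM_mem hC hlines hb hy hy0
  set c : ℝ := funkM C x b / funkM C y b with hc
  have hc0 : 0 < c := div_pos hxb.1 hyb.1
  have hmul : ∀ u ∈ C, funkM C x u = c * funkM C y u := by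
    intro u hu
    have hxu := funkM_mem hC hlines hu hx hx0
    have hyu := funkM_mem hC hlines hu hy hy0
    have hlog := h u hu
    have : Real.log (funkM C x u / funkM C x b) = Real.log (funkM C y u / funkM C y b) := by
      rw [Real.log_div (ne_of_gt hxu.1) (ne_of_gt hxb.1),
        Real.log_div (ne_of_gt hyu.1) (ne_of_gt hyb.1)]
      exact hlog
    have heq : funkM C x u / funkM C x b = funkM C y u / funkM C y b := by
      have h1 : (0:ℝ) < funkM C x u / funkM C x b := div_pos hxu.1 hxb.1
      have h2 : (0:ℝ) < funkM C y u / funkM C y b := div_pos hyu.1 hyb.1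
      exact Real.log_injOn_pos (Set.mem_Ioi.2 h1) (Set.mem_Ioi.2 h2) this
    have heq2 : funkM C x u * funkM C y b = funkM C y u * funkM C x b :=
      (div_eq_div_iff (ne_of_gt hxb.1) (ne_of_gt hyb.1)).1 heq
    rw [hc, div_mul_eq_mul_div, eq_div_iff (ne_of_gt hyb.1)]
    linarith [heq2]
  have hmul' : ∀ u ∈ C, funkM C y u = c⁻¹ * funkM C x u := by
    intro u hu
    rw [hmul u hu, ← mul_assoc, inv_mul_cancel₀ (ne_of_gt hc0), one_mul]
  have d1 : c • y - x ∈ closure C := inj_aux hC hlines hb hx hx0 hy hy0 hc0 hmul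
  have d2 : c⁻¹ • x - y ∈ closure C :=
    inj_aux hC hlines hb hy hy0 hx hx0 (by positivity) hmul'
  have d3 : -(c • y - x) ∈ closure C := by
    have := clC_smul hC hc0 d2
    convert this using 1
    rw [smul_sub, smul_smul, mul_inv_cancel₀ (ne_of_gt hc0), one_smul]
    abel
  have hz : c • y - x = 0 := hlines _ d1 d3
  have hxy : x = c • y := (sub_eq_zero.1 hz).symm
  have hc1 : c = 1 := by
    have : ψ x = c * ψ y := by rw [hxy]; simp
    rw [hxψ, hyψ, mul_one] at this
    exact this.symm
  rw [hxy, hc1, one_smul]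

end aux

section main
variable {C : Set V} {ψ : V →L[ℝ] ℝ} {D : Set V}

lemma clD_facts (hC : IsOpenCone C) (hD : D = {u | u ∈ C ∧ ψ u = 1})
    {x : V} (hx : x ∈ closure D) : x ∈ closure C ∧ x ≠ 0 ∧ ψ x = 1 := by
  have hDC : D ⊆ C := by rw [hD]; exact fun u hu => hu.1
  have h1 : x ∈ closure C := closure_mono hDC hx
  have h2 : ψ x = 1 := by
    have : closure D ⊆ ψ ⁻¹' {1} := by
      apply closure_minimal
      · rw [hD]; exact fun u hu => hu.2
      · exact IsClosed.preimage ψ.continuous isClosed_singleton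
    simpa using this hx
  refine ⟨h1, ?_, h2⟩
  intro h0
  rw [h0] at h2
  simp at h2

lemma part1 (hC : IsOpenCone C)
    (hlines : ∀ v, v ∈ closure C → -v ∈ closure C → v = 0)
    (hD : D = {u | u ∈ C ∧ ψ u = 1})
    {b : V} (hb : b ∈ D) :
    ∀ x ∈ closure D, ∀ xs : ℕ → V, (∀ n, xs n ∈ D) → Tendsto xs atTop (𝓝 x) →
        ∀ u ∈ C, Tendsto (fun n => revF C u (xs n) - revF C b (xs n)) atTop
          (𝓝 (revF C u x - revF C b x)) := by
  intro x hx xs hxs hconv u hu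
  have hbC : b ∈ C := by rw [hD] at hb; exact hb.1
  obtain ⟨hxC, hx0, _⟩ := clD_facts hC hD hx
  have hxsC : ∀ n, xs n ∈ closure C := fun n => (clD_facts hC hD (subset_closure (hxs n))).1
  have hxs0 : ∀ n, xs n ≠ 0 := fun n => (clD_facts hC hD (subset_closure (hxs n))).2.1
  have hlog : ∀ v ∈ C, Tendsto (fun n => revF C v (xs n)) atTop (𝓝 (revF C v x)) := by
    intro v hv
    have hM := funkM_tendsto hC hlines hv hxC hx0 hxsC hxs0 hconv
    have hMx := (funkM_mem hC hlines hv hxC hx0).1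
    exact ((Real.continuousAt_log (ne_of_gt hMx)).tendsto.comp hM : _)
  exact (hlog u hu).sub (hlog b hbC)

end main

/-- convergence in the reverse Funk sense versus usual convergence for
sequences in a compact cross section of a cone containing no lines. -/
theorem revF_convergence_iff_usual (C : Set V) (hC : IsOpenCone C)
    (hlines : ∀ v, v ∈ closure C → -v ∈ closure C → v = 0)
    (ψ : V →L[ℝ] ℝ) (hψ : ∀ u ∈ closure C, u ≠ 0 → 0 < ψ u)
    (D : Set V) (hD : D = {u | u ∈ C ∧ ψ u = 1}) (hDc : IsCompact (closure D))
    (b : V) (hb : b ∈ D) :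
    (∀ x ∈ closure D, ∀ xs : ℕ → V, (∀ n, xs n ∈ D) → Tendsto xs atTop (𝓝 x) →
        ∀ u ∈ C, Tendsto (fun n => revF C u (xs n) - revF C b (xs n)) atTop
          (𝓝 (revF C u x - revF C b x))) ∧
    (∀ x ∈ closure D \ D, ∀ xs : ℕ → V, (∀ n, xs n ∈ D) →
        ((∀ u ∈ C, Tendsto (fun n => revF C u (xs n) - revF C b (xs n)) atTop
            (𝓝 (revF C u x - revF C b x))) ↔ Tendsto xs atTop (𝓝 x))) := by
  have hbC : b ∈ C := by rw [hD] at hb; exact hb.1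
  refine ⟨part1 hC hlines hD hb, ?_⟩
  intro x hx xs hxs
  constructor
  · intro hconv
    apply tendsto_of_subseq_tendsto
    intro ns hns
    obtain ⟨y, hyD, φ, hφ, hyconv⟩ :=
      hDc.tendsto_subseq (x := fun n => xs (ns n)) (fun n => subset_closure (hxs (ns n)))
    obtain ⟨hxC, hx0, hxψ⟩ := clD_facts hC hD hx.1
    obtain ⟨hyC, hy0, hyψ⟩ := clD_facts hC hD hyD
    have hsub : ∀ u ∈ C, Tendsto (fun k => revF C u (xs (ns (φ k))) - revF C b (xs (ns (φ k))))
        atTop (𝓝 (revF C u y - revF C b y)) :=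
      part1 hC hlines hD hb y hyD (fun k => xs (ns (φ k))) (fun k => hxs (ns (φ k))) hyconv
    have hsub2 : ∀ u ∈ C, Tendsto (fun k => revF C u (xs (ns (φ k))) - revF C b (xs (ns (φ k))))
        atTop (𝓝 (revF C u x - revF C b x)) := by
      intro u hu
      exact (hconv u hu).comp (hns.comp hφ.tendsto_atTop)
    have heq : x = y := by
      apply inj_final hC hlines ψ hbC hxC hx0 hxψ hyC hy0 hyψ
      intro u hu
      have := tendsto_nhds_unique (hsub2 u hu) (hsub u hu)
      simpa [revF] using this
    refine ⟨φ, ?_⟩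
    rw [heq]
    exact hyconv
  · intro hconv
    exact part1 hC hlines hD hb x hx.1 xs hxs hconv
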